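/- Let u : (0,∞) → ℝ be bounded and measurable, let ū(λ) = ∫_0^∞ e^{-λ t} u(t) dt for λ > 0, and suppose lim_{σ→0⁺} σ ū(σ) = L. Then lim_{λ→0⁺} ∫_λ^∞ (λ/σ) ū(σ) dσ = L. -/

import Mathlib

open Real Set MeasureTheory Filter

theorem limit_integral_laplace (u : ℝ → ℝ) (C : ℝ) (hb : ∀ t, |u t| ≤ C)
    (hm : Measurable u) (ubar : ℝ → ℝ)
    (hubar : ∀ l : ℝ, 0 < l → ubar l = ∫ t in Set.Ioi (0 : ℝ), Real.exp (-l * t) * u t)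
    (L : ℝ)
    (hlim : Tendsto (fun σ : ℝ => σ * ubar σ) (nhdsWithin 0 (Set.Ioi 0)) (nhds L)) :
    Tendsto (fun l : ℝ => ∫ σ in Set.Ioi l, (l / σ) * ubar σ)
      (nhdsWithin 0 (Set.Ioi 0)) (nhds L) := by
  have hC : 0 ≤ C := le_trans (abs_nonneg _) (hb 0)
  -- |σ * ubar σ| ≤ C for σ > 0
  have hbound : ∀ σ : ℝ, 0 < σ → |σ * ubar σ| ≤ C := by
    intro σ hσ
    have h1 : |ubar σ| ≤ C * σ⁻¹ := by
      rw [hubar σ hσ]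
      calc |∫ t in Ioi (0:ℝ), Real.exp (-σ * t) * u t|
          ≤ ∫ t in Ioi (0:ℝ), C * Real.exp (-σ * t) := by
            rw [← Real.norm_eq_abs]
            refine (norm_integral_le_integral_norm _).trans ?_
            refine integral_mono_of_nonneg (by filter_upwards with t using norm_nonneg _)
              ((exp_neg_integrableOn_Ioi 0 hσ).const_mul C) ?_
            filter_upwards with t
            rw [Real.norm_eq_abs, abs_mul, abs_of_pos (Real.exp_pos _), mul_comm]
            exact mul_le_mul_of_nonneg_right (hb t) (Real.exp_pos _).le
        _ = C * σ⁻¹ := by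
            rw [integral_const_mul]
            have h2 : (∫ t in Ioi (0:ℝ), Real.exp (-σ * t)) = σ⁻¹ := by
              have := integral_comp_mul_left_Ioi (fun x => Real.exp (-x)) 0 hσ
              simp only [mul_zero, integral_exp_neg_Ioi_zero, smul_eq_mul, mul_one] at this
              simpa [neg_mul] using this
            rw [h2]
    calc |σ * ubar σ| = σ * |ubar σ| := by rw [abs_mul, abs_of_pos hσ]
      _ ≤ σ * (C * σ⁻¹) := mul_le_mul_of_nonneg_left h1 hσ.le
      _ = C := by field_simp
  -- a measurable version of ubar
  set g : ℝ → ℝ := fun σ => ∫ t in Ioi (0:ℝ), Real.exp (-σ * t) * u t with hg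
  have hgmeas : StronglyMeasurable g := by
    apply StronglyMeasurable.integral_prod_right
      (f := fun (σ : ℝ) (t : ℝ) => Real.exp (-σ * t) * u t)
    exact ((Real.measurable_exp.comp ((measurable_fst.neg).mul measurable_snd)).mul
      (hm.comp measurable_snd)).stronglyMeasurable
  -- change of variables σ = l * s
  have hchg : ∀ l : ℝ, 0 < l →
      (∫ σ in Ioi l, (l / σ) * ubar σ)
        = ∫ s in Ioi (1:ℝ), s⁻¹ * s⁻¹ * (l * s * ubar (l * s)) := by
    intro l hl
    have h := integral_comp_mul_left_Ioi (fun σ => (l / σ) * ubar σ) 1 hl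
    rw [mul_one, smul_eq_mul] at h
    have h2 : (∫ σ in Ioi l, (l / σ) * ubar σ)
        = l * ∫ s in Ioi (1:ℝ), (l / (l * s)) * ubar (l * s) := by
      rw [h]; field_simp
    rw [h2, ← integral_const_mul]
    refine setIntegral_congr_fun measurableSet_Ioi (fun s hs => ?_)
    have hs0 : (0:ℝ) < s := lt_trans one_pos hs
    field_simp
  -- dominated convergence
  have key : Tendsto (fun l : ℝ => ∫ s in Ioi (1:ℝ), s⁻¹ * s⁻¹ * (l * s * ubar (l * s)))
      (nhdsWithin 0 (Set.Ioi 0)) (nhds (∫ s in Ioi (1:ℝ), s⁻¹ * s⁻¹ * L)) := by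
    refine tendsto_integral_filter_of_dominated_convergence
      (fun s => s⁻¹ * s⁻¹ * C) ?_ ?_ ?_ ?_
    · filter_upwards [self_mem_nhdsWithin] with l (hl : (0:ℝ) < l)
      have hmeas : AEStronglyMeasurable
          (fun s : ℝ => s⁻¹ * s⁻¹ * (l * s * g (l * s))) (volume.restrict (Ioi 1)) := by
        refine ((measurable_inv.mul measurable_inv).mul
          ((measurable_const.mul measurable_id').mul
            (hgmeas.measurable.comp (measurable_const.mul measurable_id')))).aestronglyMeasurable
      refine hmeas.congr ?_
      rw [EventuallyEq, ae_restrict_iff' measurableSet_Ioi]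
      filter_upwards with s hs
      rw [hubar (l * s) (mul_pos hl (lt_trans one_pos hs))]
    · filter_upwards [self_mem_nhdsWithin] with l (hl : (0:ℝ) < l)
      rw [ae_restrict_iff' measurableSet_Ioi]
      filter_upwards with s hs
      have hs0 : (0:ℝ) < s := lt_trans one_pos hs
      have : ‖s⁻¹ * s⁻¹ * (l * s * ubar (l * s))‖ = s⁻¹ * s⁻¹ * |l * s * ubar (l * s)| := by
        rw [Real.norm_eq_abs, abs_mul, abs_mul, abs_of_pos (inv_pos.mpr hs0)]
      rw [this]
      exact mul_le_mul_of_nonneg_left (hbound _ (mul_pos hl hs0))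
        (mul_nonneg (inv_pos.mpr hs0).le (inv_pos.mpr hs0).le)
    · have h1 : IntegrableOn (fun s : ℝ => s ^ (-2:ℝ) * C) (Ioi 1) :=
        (integrableOn_Ioi_rpow_of_lt (by norm_num) one_pos).mul_const C
      refine h1.congr_fun (fun s hs => ?_) measurableSet_Ioi
      have hs0 : (0:ℝ) < s := lt_trans one_pos hs
      dsimp only
      rw [show (-2:ℝ) = (-1) + (-1) by norm_num, Real.rpow_add hs0,
        Real.rpow_neg_one]
    · rw [ae_restrict_iff' measurableSet_Ioi]
      filter_upwards with s hs
      have hs0 : (0:ℝ) < s := lt_trans one_pos hs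
      have hcomp : Tendsto (fun l : ℝ => l * s) (nhdsWithin 0 (Set.Ioi 0))
          (nhdsWithin 0 (Set.Ioi 0)) := by
        refine tendsto_nhdsWithin_of_tendsto_nhds_of_eventually_within _ ?_ ?_
        · have : Tendsto (fun l : ℝ => l * s) (nhds 0) (nhds (0 * s)) :=
            (continuous_id.mul continuous_const).tendsto 0
          rw [zero_mul] at this
          exact this.mono_left nhdsWithin_le_nhds
        · filter_upwards [self_mem_nhdsWithin] with l (hl : (0:ℝ) < l)
          exact mul_pos hl hs0
      exact (hlim.comp hcomp).const_mul _
  -- compute the limiting integral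
  have hL : (∫ s in Ioi (1:ℝ), s⁻¹ * s⁻¹ * L) = L := by
    have h1 : (∫ s in Ioi (1:ℝ), s⁻¹ * s⁻¹ * L)
        = ∫ s in Ioi (1:ℝ), s ^ (-2:ℝ) * L := by
      refine setIntegral_congr_fun measurableSet_Ioi (fun s hs => ?_)
      have hs0 : (0:ℝ) < s := lt_trans one_pos hs
      rw [show (-2:ℝ) = (-1) + (-1) by norm_num, Real.rpow_add hs0, Real.rpow_neg_one]
    rw [h1, integral_mul_const, integral_Ioi_rpow_of_lt (by norm_num) one_pos]
    norm_num
  rw [← hL]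
  refine key.congr' ?_
  filter_upwards [self_mem_nhdsWithin] with l (hl : (0:ℝ) < l)
  exact (hchg l hl).symm
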